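/- Let G, H, K be finite groups and R ≤ G × H, T ≤ H × K subgroups. For a relation S define the operator Π(S) on functions by (Π(S)f)(g) = Σ_{h : (g,h) ∈ S} f(h). Then Π(R) ∘ Π(T) = |ker T ∩ indef R| · Π(TR), where ker T = {h : (h,1) ∈ T}, indef R = {h : (1,h) ∈ R}, and TR is the relational composition. -/
import Mathlib


open scoped Classical

/-- For finite groups and multiplicative relations `R ≤ G × H`, `T ≤ H × K`, the summation
operators satisfy `Π(R) ∘ Π(T) = |ker T ∩ indef R| · Π(TR)`. -/
theorem stmt7 {G H K : Type*} [Group G] [Group H] [Group K]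
    [Fintype G] [Fintype H] [Fintype K]
    (R : Subgroup (G × H)) (T : Subgroup (H × K)) (f : K → ℂ) (g : G) :
    (∑ h : H, if (g, h) ∈ R then (∑ k : K, if (h, k) ∈ T then f k else 0) else 0) =
      (Nat.card {h : H // (h, (1 : K)) ∈ T ∧ ((1 : G), h) ∈ R} : ℂ) *
        ∑ k : K, if (∃ h : H, (g, h) ∈ R ∧ (h, k) ∈ T) then f k else 0 := by
  have hcard : Nat.card {h : H // (h, (1 : K)) ∈ T ∧ ((1 : G), h) ∈ R}
      = (Finset.univ.filter fun h : H => (h, (1 : K)) ∈ T ∧ ((1 : G), h) ∈ R).card := by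
    rw [Nat.card_eq_fintype_card, Fintype.card_subtype]
  have key : ∀ k : K,
      (Finset.univ.filter fun h : H => (g, h) ∈ R ∧ (h, k) ∈ T).card
        = if (∃ h : H, (g, h) ∈ R ∧ (h, k) ∈ T) then
            (Finset.univ.filter fun h : H => (h, (1 : K)) ∈ T ∧ ((1 : G), h) ∈ R).card
          else 0 := by
    intro k
    split_ifs with hex
    · obtain ⟨h₀, hR0, hT0⟩ := hex
      apply Finset.card_bij' (fun h _ => h₀⁻¹ * h) (fun h _ => h₀ * h)
      · intro h hh
        simp only [Finset.mem_filter, Finset.mem_univ, true_and] at hh ⊢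
        obtain ⟨hR1, hT1⟩ := hh
        constructor
        · have := T.mul_mem (T.inv_mem hT0) hT1
          simpa using this
        · have := R.mul_mem (R.inv_mem hR0) hR1
          simpa using this
      · intro h hh
        simp only [Finset.mem_filter, Finset.mem_univ, true_and] at hh ⊢
        obtain ⟨hT1, hR1⟩ := hh
        constructor
        · have := R.mul_mem hR0 hR1
          simpa using this
        · have := T.mul_mem hT0 hT1
          simpa [mul_comm] using this
      · intro h _; group
      · intro h _; group
    · rw [Finset.card_eq_zero, Finset.filter_eq_empty_iff]
      intro h _
      exact fun hc => hex ⟨h, hc⟩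
  calc (∑ h : H, if (g, h) ∈ R then (∑ k : K, if (h, k) ∈ T then f k else 0) else 0)
      = ∑ h : H, ∑ k : K, if (g, h) ∈ R ∧ (h, k) ∈ T then f k else 0 := by
        apply Finset.sum_congr rfl; intro h _
        split_ifs with h1
        · apply Finset.sum_congr rfl; intro k _; simp [h1]
        · simp [h1]
    _ = ∑ k : K, ∑ h : H, if (g, h) ∈ R ∧ (h, k) ∈ T then f k else 0 := Finset.sum_comm
    _ = ∑ k : K, ((Finset.univ.filter fun h : H => (g, h) ∈ R ∧ (h, k) ∈ T).card : ℂ) * f k := by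
        apply Finset.sum_congr rfl; intro k _
        rw [Finset.sum_ite, Finset.sum_const_zero, add_zero, Finset.sum_const,
          nsmul_eq_mul]
    _ = (Nat.card {h : H // (h, (1 : K)) ∈ T ∧ ((1 : G), h) ∈ R} : ℂ) *
        ∑ k : K, if (∃ h : H, (g, h) ∈ R ∧ (h, k) ∈ T) then f k else 0 := by
        rw [Finset.mul_sum]
        apply Finset.sum_congr rfl; intro k _
        rw [key k, hcard]
        split_ifs <;> simp
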